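/- Let M = (Q, n1, n2, ⇒, q0, qf, I) be a two-counter Minsky machine and let (A, R, Rp, A0, ↪) be its APA encoding. For every single Minsky machine step (q, m1, m2) ⇒ (q', m1', m2'), there exist exactly two consecutive APA transitions (with respect to any reference set Ax ⊆ A) from F(A^I ∪ {σQ(q), σ1(m1), σ2(m2)}) to F(A^I ∪ {σQ(q'), σ1(m1'), σ2(m2')}), passing through an intermediate state of the form F(A^I ∪ {σIc(x), σ1(m1), σ2(m2)}) for some instruction x ∈ I whose first component is q. -/

import Mathlib

/-- A two-counter Minsky machine over a state type `Q`.  An instruction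
`(q1, i, q2, u)` has source state `q1 ≠ qf`, counter index `i ∈ {1,2}`,
target state `q2` and optional alternative target `u : Option Q`
(`none` playing the role of `ε`). -/
structure Minsky (Q : Type*) where
  n1 : ℕ
  n2 : ℕ
  q0 : Q
  qf : Q
  I : Set (Q × ℕ × Q × Option Q)
  I_idx : ∀ x ∈ I, x.2.1 = 1 ∨ x.2.1 = 2
  I_src : ∀ x ∈ I, x.1 ≠ qf
  I_total : ∀ q : Q, q ≠ qf → ∃ i q2 u, (q, i, q2, u) ∈ I

/-- The one-step relation `⇒` of a two-counter Minsky machine. -/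
inductive Minsky.Step {Q : Type*} (M : Minsky Q) : Q × ℕ × ℕ → Q × ℕ × ℕ → Prop
  | inc1 {q1 q2 : Q} {m1 m2 : ℕ} : (q1, 1, q2, (none : Option Q)) ∈ M.I →
      M.Step (q1, m1, m2) (q2, m1 + 1, m2)
  | inc2 {q1 q2 : Q} {m1 m2 : ℕ} : (q1, 2, q2, (none : Option Q)) ∈ M.I →
      M.Step (q1, m1, m2) (q2, m1, m2 + 1)
  | dec1 {q1 q2 q3 : Q} {m1 m2 : ℕ} : (q1, 1, q2, some q3) ∈ M.I → 0 < m1 →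
      M.Step (q1, m1, m2) (q3, m1 - 1, m2)
  | dec2 {q1 q2 q3 : Q} {m1 m2 : ℕ} : (q1, 2, q2, some q3) ∈ M.I → 0 < m2 →
      M.Step (q1, m1, m2) (q3, m1, m2 - 1)
  | zero1 {q1 q2 q3 : Q} {m2 : ℕ} : (q1, 1, q2, some q3) ∈ M.I →
      M.Step (q1, 0, m2) (q2, 0, m2)
  | zero2 {q1 q2 q3 : Q} {m1 : ℕ} : (q1, 2, q2, some q3) ∈ M.I →
      M.Step (q1, m1, 0) (q2, m1, 0)

/-- `M.StepN k c c'` says `⇒^k(c) = c'`, i.e. `c'` is obtained from `c`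
by exactly `k` Minsky machine steps. -/
def Minsky.StepN {Q : Type*} (M : Minsky Q) : ℕ → Q × ℕ × ℕ → Q × ℕ × ℕ → Prop
  | 0, c, c' => c = c'
  | k + 1, c, c' => ∃ c'', M.Step c c'' ∧ M.StepN k c'' c'

/-- An Abstract Persuasion Argumentation framework over the argument type `α`:
an attack relation `R`, a persuasion relation `Rp ⊆ A × (A ∪ {ε}) × A`
(`none` playing the role of `ε`), and an initial set `A0`.
A state `F(A1)` is identified with the set `A1 ⊆ A` of visible arguments
(since the state is `(A1, R ∩ (A1 × A1))`, a function of `A1`). -/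
structure APA (α : Type*) where
  R : Set (α × α)
  Rp : Set (α × Option α × α)
  A0 : Set α

namespace APA

variable {α : Type*} (F : APA α)

/-- `a1` attacks `a2` in the state `F(A1)`. -/
def Attacks (A1 : Set α) (a1 a2 : α) : Prop :=
  a1 ∈ A1 ∧ a2 ∈ A1 ∧ (a1, a2) ∈ F.R

/-- `Γ^{Ax}_{F(A1)}`: members `(a1, α, a2)` of `Rp` with `a1 ∈ A1`,
`α ∈ {ε} ∪ A1`, and `a1` not attacked in `F(A1)` by any member of `Ax`. -/
def gamma (Ax A1 : Set α) : Set (α × Option α × α) :=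
  {t | t ∈ F.Rp ∧ t.1 ∈ A1 ∧ (∀ a : α, t.2.1 = some a → a ∈ A1) ∧
    ∀ b ∈ Ax, ¬ F.Attacks A1 b t.1}

/-- `neg^{A1}(Γ)`. -/
def neg (A1 : Set α) (Γ : Set (α × Option α × α)) : Set α :=
  {ax | ax ∈ A1 ∧ ∃ a1 ∈ A1, ∃ a2 : α, (a1, some ax, a2) ∈ Γ}

/-- `pos^{A1}(Γ)`. -/
def pos (A1 : Set α) (Γ : Set (α × Option α × α)) : Set α :=
  {a2 | ∃ a1 ∈ A1, ∃ m : Option α, (∀ a : α, m = some a → a ∈ A1) ∧ (a1, m, a2) ∈ Γ}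

/-- The transition `F(A1) ↪^{Ax} F(A2)` effected by the specific nonempty
`Γ ⊆ Γ^{Ax}_{F(A1)}`. -/
def TransVia (Ax : Set α) (Γ : Set (α × Option α × α)) (A1 A2 : Set α) : Prop :=
  Γ.Nonempty ∧ Γ ⊆ F.gamma Ax A1 ∧ A2 = (A1 \ neg A1 Γ) ∪ pos A1 Γ

/-- The transition relation `F(A1) ↪^{Ax} F(A2)`. -/
def Trans (Ax A1 A2 : Set α) : Prop :=
  ∃ Γ : Set (α × Option α × α), F.TransVia Ax Γ A1 A2

/-- A state `F(A1)` is reachable iff it is obtained from the initial state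
`F(A0)` by a finite sequence of transitions (with arbitrary reference sets). -/
def Reachable (A1 : Set α) : Prop :=
  Relation.ReflTransGen (fun X Y => ∃ Ax : Set α, F.Trans Ax X Y) F.A0 A1

end APA

/-- `sigC σ1 σ2 i` is `σi` for `i ∈ {1, 2}`. -/
def sigC {α : Type*} (σ1 σ2 : ℕ → α) (i : ℕ) : ℕ → α :=
  if i = 1 then σ1 else σ2

/-- The persuasion relation of the APA encoding of a Minsky machine `M`. -/
def encRp {Q α : Type*} (M : Minsky Q) (σ1 σ2 : ℕ → α) (σQ : Q → α)
    (σI σIc : M.I → α) : Set (α × Option α × α) :=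
  {t | (∃ x : M.I, t = (σI x, some (σQ x.val.1), σIc x)) ∨
    (∃ x : M.I, ∃ n : ℕ, x.val.2.2.2 = none ∧
      t = (σIc x, some (sigC σ1 σ2 x.val.2.1 n), sigC σ1 σ2 x.val.2.1 (n + 1))) ∨
    (∃ x : M.I, ∃ n : ℕ, 1 ≤ n ∧ (∃ q3 : Q, x.val.2.2.2 = some q3) ∧
      t = (σIc x, some (sigC σ1 σ2 x.val.2.1 n), sigC σ1 σ2 x.val.2.1 (n - 1))) ∨
    (∃ x : M.I, ∃ n : ℕ, x.val.2.2.2 = none ∧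
      t = (sigC σ1 σ2 x.val.2.1 n, some (σIc x), σQ x.val.2.2.1)) ∨
    (∃ x : M.I, ∃ n : ℕ, 1 ≤ n ∧ ∃ q3 : Q, x.val.2.2.2 = some q3 ∧
      t = (sigC σ1 σ2 x.val.2.1 n, some (σIc x), σQ q3)) ∨
    (∃ x : M.I, ∃ q3 : Q, x.val.2.2.2 = some q3 ∧
      t = (sigC σ1 σ2 x.val.2.1 0, some (σIc x), σQ x.val.2.2.1))}

/-- The APA encoding of a two-counter Minsky machine `M`, over the argument
type `α` (playing the role of the class `A` of arguments): injective maps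
`σ1, σ2, σQ, σI, σIc` with pairwise disjoint ranges covering `α`, an empty
attack relation, the persuasion relation `encRp`, and the initial set
`{σ1 n1, σ2 n2, σQ q0} ∪ A^I`. -/
structure Encoding {Q : Type*} (M : Minsky Q) (α : Type*) extends APA α where
  σ1 : ℕ → α
  σ2 : ℕ → α
  σQ : Q → α
  σI : M.I → α
  σIc : M.I → α
  inj1 : Function.Injective σ1
  inj2 : Function.Injective σ2
  injQ : Function.Injective σQ
  injI : Function.Injective σI
  injIc : Function.Injective σIc
  disjoint_ranges : List.Pairwise Disjoint
    [Set.range σ1, Set.range σ2, Set.range σQ, Set.range σI, Set.range σIc]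
  ranges_cover : Set.range σ1 ∪ Set.range σ2 ∪ Set.range σQ ∪
    Set.range σI ∪ Set.range σIc = Set.univ
  R_empty : toAPA.R = ∅
  Rp_spec : toAPA.Rp = encRp M σ1 σ2 σQ σI σIc
  A0_spec : toAPA.A0 = {σ1 M.n1, σ2 M.n2, σQ M.q0} ∪ Set.range σI

/-- The set of visible arguments of the APA state `F(A^I ∪ {σQ q, σ1 m1, σ2 m2})`
corresponding to the Minsky machine configuration `(q, m1, m2)`. -/
def encState {Q α : Type*} {M : Minsky Q} (E : Encoding M α)
    (q : Q) (m1 m2 : ℕ) : Set α :=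
  Set.range E.σI ∪ {E.σQ q, E.σ1 m1, E.σ2 m2}

/-- The set of visible arguments of the intermediate APA state
`F(A^I ∪ {σIc x, σ1 m1, σ2 m2})`. -/
def encStateC {Q α : Type*} {M : Minsky Q} (E : Encoding M α)
    (x : M.I) (m1 m2 : ℕ) : Set α :=
  Set.range E.σI ∪ {E.σIc x, E.σ1 m1, E.σ2 m2}


section Helpers

variable {Q : Type*} {α : Type*} {M : Minsky Q} (E : Encoding M α)

lemma disj_ne {s t : Set α} (h : Disjoint s t) {a b : α} (ha : a ∈ s) (hb : b ∈ t) :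
    a ≠ b := fun e => Set.disjoint_left.1 h ha (e ▸ hb)

lemma no_attacks {A1 : Set α} {b c : α} : ¬ E.toAPA.Attacks A1 b c := by
  rintro ⟨-, -, hR⟩
  rw [E.R_empty] at hR
  exact hR

/-- First transition: consuming `σQ q`, producing `σIc x`. -/
lemma trans1 (Ax : Set α) (x : M.I) (q : Q) (m1 m2 : ℕ) (hx : x.val.1 = q) :
    E.toAPA.Trans Ax (encState E q m1 m2) (encStateC E x m1 m2) := by
  have hd := E.disjoint_ranges
  simp only [List.pairwise_cons, List.mem_cons, List.mem_singleton,
    List.not_mem_nil, forall_eq_or_imp, forall_eq, List.Pairwise.nil,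
    and_true, IsEmpty.forall_iff] at hd
  obtain ⟨⟨h12,h1Q,h1I,h1c⟩,⟨h2Q,h2I,h2c⟩,⟨hQI,hQc⟩,h4c,-⟩ := hd
  have hI_mem : E.σI x ∈ encState E q m1 m2 := Or.inl (Set.mem_range_self _)
  have hQ_mem : E.σQ q ∈ encState E q m1 m2 := Or.inr (Or.inl rfl)
  have hQ1 : E.σQ q ≠ E.σ1 m1 :=
    disj_ne h1Q.symm (Set.mem_range_self _) (Set.mem_range_self _)
  have hQ2 : E.σQ q ≠ E.σ2 m2 :=
    disj_ne h2Q.symm (Set.mem_range_self _) (Set.mem_range_self _)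
  have hQI' : ∀ y : M.I, E.σQ q ≠ E.σI y := fun y =>
    disj_ne hQI (Set.mem_range_self _) (Set.mem_range_self _)
  refine ⟨{(E.σI x, some (E.σQ q), E.σIc x)}, Set.singleton_nonempty _, ?_, ?_⟩
  · rintro t rfl
    refine ⟨?_, hI_mem, ?_, fun b _ => no_attacks E⟩
    · rw [E.Rp_spec]; exact Or.inl ⟨x, by rw [hx]⟩
    · rintro a ha
      simp only [Option.some.injEq] at ha
      subst ha
      exact hQ_mem
  · have hneg : APA.neg (encState E q m1 m2) {(E.σI x, some (E.σQ q), E.σIc x)}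
        = {E.σQ q} := by
      ext a
      simp only [APA.neg, Set.mem_setOf_eq, Set.mem_singleton_iff, Prod.mk.injEq,
        Option.some.injEq]
      constructor
      · rintro ⟨-, a1, -, a2, -, rfl, -⟩; rfl
      · rintro rfl
        exact ⟨hQ_mem, E.σI x, hI_mem, E.σIc x, rfl, rfl, rfl⟩
    have hpos : APA.pos (encState E q m1 m2) {(E.σI x, some (E.σQ q), E.σIc x)}
        = {E.σIc x} := by
      ext a
      simp only [APA.pos, Set.mem_setOf_eq, Set.mem_singleton_iff, Prod.mk.injEq]
      constructor
      · rintro ⟨a1, -, m, -, -, -, rfl⟩; rfl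
      · rintro rfl
        exact ⟨E.σI x, hI_mem, some (E.σQ q), fun a ha => by
          simp only [Option.some.injEq] at ha; subst ha; exact hQ_mem, rfl, rfl, rfl⟩
    rw [hneg, hpos]
    ext a
    simp only [encState, encStateC, Set.mem_union, Set.mem_diff,
      Set.mem_singleton_iff, Set.mem_insert_iff]
    constructor
    · rintro (⟨y, rfl⟩ | rfl | rfl | rfl)
      · exact Or.inl ⟨Or.inl ⟨y, rfl⟩, fun e => hQI' y e.symm⟩
      · exact Or.inr rfl
      · exact Or.inl ⟨Or.inr (Or.inr (Or.inl rfl)), fun e => hQ1 e.symm⟩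
      · exact Or.inl ⟨Or.inr (Or.inr (Or.inr rfl)), fun e => hQ2 e.symm⟩
    · rintro (⟨hy | rfl | rfl | rfl, hne⟩ | rfl)
      · exact Or.inl hy
      · exact absurd rfl hne
      · exact Or.inr (Or.inr (Or.inl rfl))
      · exact Or.inr (Or.inr (Or.inr rfl))
      · exact Or.inr (Or.inl rfl)

/-- Second transition, increment/decrement shape. -/
lemma trans2_gen (Ax : Set α) (x : M.I) (c_old c_new qt other : α)
    (h1 : (E.σIc x, some c_old, c_new) ∈ E.toAPA.Rp)
    (h2 : (c_old, some (E.σIc x), qt) ∈ E.toAPA.Rp)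
    (ho1 : other ≠ c_old) (ho2 : other ≠ E.σIc x)
    (hcI : c_old ∉ Set.range E.σI) (hicI : E.σIc x ∉ Set.range E.σI) :
    E.toAPA.Trans Ax (Set.range E.σI ∪ {E.σIc x, c_old, other})
      (Set.range E.σI ∪ {qt, c_new, other}) := by
  set A1 : Set α := Set.range E.σI ∪ {E.σIc x, c_old, other} with hA1
  have hic_mem : E.σIc x ∈ A1 := Or.inr (Or.inl rfl)
  have hc_mem : c_old ∈ A1 := Or.inr (Or.inr (Or.inl rfl))
  set t1 : α × Option α × α := (E.σIc x, some c_old, c_new) with ht1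
  set t2 : α × Option α × α := (c_old, some (E.σIc x), qt) with ht2
  refine ⟨{t1, t2}, ⟨t1, Or.inl rfl⟩, ?_, ?_⟩
  · rintro t (rfl | rfl)
    · refine ⟨h1, hic_mem, ?_, fun b _ => no_attacks E⟩
      rintro a ha
      simp only [ht1, Option.some.injEq] at ha
      subst ha; exact hc_mem
    · refine ⟨h2, hc_mem, ?_, fun b _ => no_attacks E⟩
      rintro a ha
      simp only [ht2, Option.some.injEq] at ha
      subst ha; exact hic_mem
  · have hneg : APA.neg A1 {t1, t2} = {c_old, E.σIc x} := by
      ext a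
      simp only [APA.neg, Set.mem_setOf_eq, Set.mem_insert_iff,
        Set.mem_singleton_iff, ht1, ht2, Prod.mk.injEq, Option.some.injEq]
      constructor
      · rintro ⟨-, a1, -, a2, (⟨rfl, rfl, rfl⟩ | ⟨rfl, rfl, rfl⟩)⟩
        · exact Or.inl rfl
        · exact Or.inr rfl
      · rintro (rfl | rfl)
        · exact ⟨hc_mem, E.σIc x, hic_mem, c_new, Or.inl ⟨rfl, rfl, rfl⟩⟩
        · exact ⟨hic_mem, c_old, hc_mem, qt, Or.inr ⟨rfl, rfl, rfl⟩⟩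
    have hpos : APA.pos A1 {t1, t2} = {c_new, qt} := by
      ext a
      simp only [APA.pos, Set.mem_setOf_eq, Set.mem_insert_iff,
        Set.mem_singleton_iff, ht1, ht2, Prod.mk.injEq, Option.some.injEq]
      constructor
      · rintro ⟨a1, -, m, -, (⟨rfl, rfl, rfl⟩ | ⟨rfl, rfl, rfl⟩)⟩
        · exact Or.inl rfl
        · exact Or.inr rfl
      · rintro (rfl | rfl)
        · exact ⟨E.σIc x, hic_mem, some c_old, fun b hb => by
            simp only [Option.some.injEq] at hb; subst hb; exact hc_mem,
            Or.inl ⟨rfl, rfl, rfl⟩⟩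
        · exact ⟨c_old, hc_mem, some (E.σIc x), fun b hb => by
            simp only [Option.some.injEq] at hb; subst hb; exact hic_mem,
            Or.inr ⟨rfl, rfl, rfl⟩⟩
    rw [hneg, hpos]
    ext a
    simp only [hA1, Set.mem_union, Set.mem_diff, Set.mem_insert_iff,
      Set.mem_singleton_iff]
    constructor
    · rintro (⟨y, rfl⟩ | rfl | rfl | rfl)
      · refine Or.inl ⟨Or.inl ⟨y, rfl⟩, ?_⟩
        rintro (e | e)
        · exact hcI (e ▸ ⟨y, rfl⟩)
        · exact hicI (e ▸ ⟨y, rfl⟩)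
      · exact Or.inr (Or.inr rfl)
      · exact Or.inr (Or.inl rfl)
      · refine Or.inl ⟨Or.inr (Or.inr (Or.inr rfl)), ?_⟩
        rintro (rfl | rfl)
        · exact ho1 rfl
        · exact ho2 rfl
    · rintro (⟨⟨y, rfl⟩ | rfl | rfl | rfl, hne⟩ | rfl | rfl)
      · exact Or.inl ⟨y, rfl⟩
      · exact absurd (Or.inr rfl) hne
      · exact absurd (Or.inl rfl) hne
      · exact Or.inr (Or.inr (Or.inr rfl))
      · exact Or.inr (Or.inr (Or.inl rfl))
      · exact Or.inr (Or.inl rfl)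

/-- Second transition, zero-test shape. -/
lemma trans2_zero (Ax : Set α) (x : M.I) (c_old qt other : α)
    (h2 : (c_old, some (E.σIc x), qt) ∈ E.toAPA.Rp)
    (hco : c_old ≠ E.σIc x) (ho2 : other ≠ E.σIc x)
    (hicI : E.σIc x ∉ Set.range E.σI) :
    E.toAPA.Trans Ax (Set.range E.σI ∪ {E.σIc x, c_old, other})
      (Set.range E.σI ∪ {qt, c_old, other}) := by
  set A1 : Set α := Set.range E.σI ∪ {E.σIc x, c_old, other} with hA1
  have hic_mem : E.σIc x ∈ A1 := Or.inr (Or.inl rfl)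
  have hc_mem : c_old ∈ A1 := Or.inr (Or.inr (Or.inl rfl))
  set t2 : α × Option α × α := (c_old, some (E.σIc x), qt) with ht2
  refine ⟨{t2}, Set.singleton_nonempty _, ?_, ?_⟩
  · rintro t rfl
    refine ⟨h2, hc_mem, ?_, fun b _ => no_attacks E⟩
    rintro a ha
    simp only [ht2, Option.some.injEq] at ha
    subst ha; exact hic_mem
  · have hneg : APA.neg A1 {t2} = {E.σIc x} := by
      ext a
      simp only [APA.neg, Set.mem_setOf_eq, Set.mem_singleton_iff, ht2,
        Prod.mk.injEq, Option.some.injEq]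
      constructor
      · rintro ⟨-, a1, -, a2, rfl, rfl, rfl⟩; rfl
      · rintro rfl
        exact ⟨hic_mem, c_old, hc_mem, qt, rfl, rfl, rfl⟩
    have hpos : APA.pos A1 {t2} = {qt} := by
      ext a
      simp only [APA.pos, Set.mem_setOf_eq, Set.mem_singleton_iff, ht2,
        Prod.mk.injEq, Option.some.injEq]
      constructor
      · rintro ⟨a1, -, m, -, rfl, rfl, rfl⟩; rfl
      · rintro rfl
        exact ⟨c_old, hc_mem, some (E.σIc x), fun b hb => by
          simp only [Option.some.injEq] at hb; subst hb; exact hic_mem,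
          rfl, rfl, rfl⟩
    rw [hneg, hpos]
    ext a
    simp only [hA1, Set.mem_union, Set.mem_diff, Set.mem_insert_iff,
      Set.mem_singleton_iff]
    constructor
    · rintro (⟨y, rfl⟩ | rfl | rfl | rfl)
      · exact Or.inl ⟨Or.inl ⟨y, rfl⟩, fun e => hicI (e ▸ ⟨y, rfl⟩)⟩
      · exact Or.inr rfl
      · exact Or.inl ⟨Or.inr (Or.inr (Or.inl rfl)), hco⟩
      · exact Or.inl ⟨Or.inr (Or.inr (Or.inr rfl)), ho2⟩
    · rintro (⟨⟨y, rfl⟩ | rfl | rfl | rfl, hne⟩ | rfl)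
      · exact Or.inl ⟨y, rfl⟩
      · exact absurd rfl hne
      · exact Or.inr (Or.inr (Or.inl rfl))
      · exact Or.inr (Or.inr (Or.inr rfl))
      · exact Or.inr (Or.inl rfl)

end Helpers

/-- every single Minsky machine step `(q, m1, m2) ⇒ (q', m1', m2')`
is simulated by exactly two consecutive APA transitions (w.r.t. any reference
set) passing through an intermediate state `F(A^I ∪ {σIc x, σ1 m1, σ2 m2})`
for some instruction `x ∈ I` whose first component is `q`. -/
theorem single_step_two_transitions {Q α : Type*} [Finite Q]
    (M : Minsky Q) (E : Encoding M α) (q q' : Q) (m1 m2 m1' m2' : ℕ)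
    (h : M.Step (q, m1, m2) (q', m1', m2')) (Ax : Set α) :
    ∃ x : M.I, x.val.1 = q ∧
      E.toAPA.Trans Ax (encState E q m1 m2) (encStateC E x m1 m2) ∧
      E.toAPA.Trans Ax (encStateC E x m1 m2) (encState E q' m1' m2') := by
  have hd := E.disjoint_ranges
  simp only [List.pairwise_cons, List.mem_cons, List.mem_singleton,
    List.not_mem_nil, forall_eq_or_imp, forall_eq, List.Pairwise.nil,
    and_true, IsEmpty.forall_iff] at hd
  obtain ⟨⟨h12,h1Q,h1I,h1c⟩,⟨h2Q,h2I,h2c⟩,⟨hQI,hQc⟩,hIc,-⟩ := hd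
  have h1I' : ∀ n, E.σ1 n ∉ Set.range E.σI := fun n hm =>
    disj_ne h1I (Set.mem_range_self n) hm rfl
  have h2I' : ∀ n, E.σ2 n ∉ Set.range E.σI := fun n hm =>
    disj_ne h2I (Set.mem_range_self n) hm rfl
  have hicI' : ∀ y, E.σIc y ∉ Set.range E.σI := fun y hm =>
    disj_ne hIc.1.symm (Set.mem_range_self y) hm rfl
  have h12' : ∀ n m, E.σ1 n ≠ E.σ2 m := fun n m =>
    disj_ne h12 (Set.mem_range_self n) (Set.mem_range_self m)
  have h1c' : ∀ n y, E.σ1 n ≠ E.σIc y := fun n y =>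
    disj_ne h1c.1 (Set.mem_range_self n) (Set.mem_range_self y)
  have h2c' : ∀ n y, E.σ2 n ≠ E.σIc y := fun n y =>
    disj_ne h2c.1 (Set.mem_range_self n) (Set.mem_range_self y)
  cases h with
  | @inc1 _ _ _ _ hmem =>
    refine ⟨⟨_, hmem⟩, rfl, trans1 E Ax _ q m1 m2 rfl, ?_⟩
    set x : M.I := ⟨(q, 1, q', none), hmem⟩
    have e1 : encStateC E x m1 m2
        = Set.range E.σI ∪ {E.σIc x, E.σ1 m1, E.σ2 m2} := rfl
    have e2 : encState E q' (m1 + 1) m2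
        = Set.range E.σI ∪ {E.σQ q', E.σ1 (m1 + 1), E.σ2 m2} := rfl
    rw [e1, e2]
    refine trans2_gen E Ax x (E.σ1 m1) (E.σ1 (m1 + 1)) (E.σQ q') (E.σ2 m2)
      ?_ ?_ (fun e => h12' m1 m2 e.symm) (h2c' m2 x) (h1I' m1) (hicI' x)
    · rw [E.Rp_spec]
      exact Or.inr (Or.inl ⟨x, m1, rfl, by simp [sigC, x]⟩)
    · rw [E.Rp_spec]
      exact Or.inr (Or.inr (Or.inr (Or.inl ⟨x, m1, rfl, by simp [sigC, x]⟩)))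
  | @inc2 _ _ _ _ hmem =>
    refine ⟨⟨_, hmem⟩, rfl, trans1 E Ax _ q m1 m2 rfl, ?_⟩
    set x : M.I := ⟨(q, 2, q', none), hmem⟩
    have e1 : encStateC E x m1 m2
        = Set.range E.σI ∪ {E.σIc x, E.σ2 m2, E.σ1 m1} := by
      rw [encStateC, Set.pair_comm (E.σ1 m1) (E.σ2 m2)]
    have e2 : encState E q' m1 (m2 + 1)
        = Set.range E.σI ∪ {E.σQ q', E.σ2 (m2 + 1), E.σ1 m1} := by
      rw [encState, Set.pair_comm (E.σ1 m1) (E.σ2 (m2 + 1))]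
    rw [e1, e2]
    refine trans2_gen E Ax x (E.σ2 m2) (E.σ2 (m2 + 1)) (E.σQ q') (E.σ1 m1)
      (?_) (?_) (h12' m1 m2) (h1c' m1 x) (h2I' m2) (hicI' x)
    · rw [E.Rp_spec]
      exact Or.inr (Or.inl ⟨x, m2, rfl, by simp [sigC, x]⟩)
    · rw [E.Rp_spec]
      exact Or.inr (Or.inr (Or.inr (Or.inl ⟨x, m2, rfl, by simp [sigC, x]⟩)))
  | @dec1 _ q2 _ _ _ hmem hpos =>
    refine ⟨⟨_, hmem⟩, rfl, trans1 E Ax _ q m1 m2 rfl, ?_⟩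
    set x : M.I := ⟨(q, 1, q2, some q'), hmem⟩
    have e1 : encStateC E x m1 m2
        = Set.range E.σI ∪ {E.σIc x, E.σ1 m1, E.σ2 m2} := rfl
    have e2 : encState E q' (m1 - 1) m2
        = Set.range E.σI ∪ {E.σQ q', E.σ1 (m1 - 1), E.σ2 m2} := rfl
    rw [e1, e2]
    refine trans2_gen E Ax x (E.σ1 m1) (E.σ1 (m1 - 1)) (E.σQ q') (E.σ2 m2)
      ?_ ?_ (fun e => h12' m1 m2 e.symm) (h2c' m2 x) (h1I' m1) (hicI' x)
    · rw [E.Rp_spec]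
      exact Or.inr (Or.inr (Or.inl ⟨x, m1, hpos, ⟨q', rfl⟩, by simp [sigC, x]⟩))
    · rw [E.Rp_spec]
      exact Or.inr (Or.inr (Or.inr (Or.inr (Or.inl
        ⟨x, m1, hpos, q', rfl, by simp [sigC, x]⟩))))
  | @dec2 _ q2 _ _ _ hmem hpos =>
    refine ⟨⟨_, hmem⟩, rfl, trans1 E Ax _ q m1 m2 rfl, ?_⟩
    set x : M.I := ⟨(q, 2, q2, some q'), hmem⟩
    have e1 : encStateC E x m1 m2
        = Set.range E.σI ∪ {E.σIc x, E.σ2 m2, E.σ1 m1} := by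
      rw [encStateC, Set.pair_comm (E.σ1 m1) (E.σ2 m2)]
    have e2 : encState E q' m1 (m2 - 1)
        = Set.range E.σI ∪ {E.σQ q', E.σ2 (m2 - 1), E.σ1 m1} := by
      rw [encState, Set.pair_comm (E.σ1 m1) (E.σ2 (m2 - 1))]
    rw [e1, e2]
    refine trans2_gen E Ax x (E.σ2 m2) (E.σ2 (m2 - 1)) (E.σQ q') (E.σ1 m1)
      ?_ ?_ (h12' m1 m2) (h1c' m1 x) (h2I' m2) (hicI' x)
    · rw [E.Rp_spec]
      exact Or.inr (Or.inr (Or.inl ⟨x, m2, hpos, ⟨q', rfl⟩, by simp [sigC, x]⟩))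
    · rw [E.Rp_spec]
      exact Or.inr (Or.inr (Or.inr (Or.inr (Or.inl
        ⟨x, m2, hpos, q', rfl, by simp [sigC, x]⟩))))
  | @zero1 _ _ q3 _ hmem =>
    refine ⟨⟨_, hmem⟩, rfl, trans1 E Ax _ q 0 m2 rfl, ?_⟩
    set x : M.I := ⟨(q, 1, q', some q3), hmem⟩
    have e1 : encStateC E x 0 m2
        = Set.range E.σI ∪ {E.σIc x, E.σ1 0, E.σ2 m2} := rfl
    have e2 : encState E q' 0 m2
        = Set.range E.σI ∪ {E.σQ q', E.σ1 0, E.σ2 m2} := rfl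
    rw [e1, e2]
    refine trans2_zero E Ax x (E.σ1 0) (E.σQ q') (E.σ2 m2)
      ?_ (h1c' 0 x) (h2c' m2 x) (hicI' x)
    rw [E.Rp_spec]
    exact Or.inr (Or.inr (Or.inr (Or.inr (Or.inr ⟨x, q3, rfl, by simp [sigC, x]⟩))))
  | @zero2 _ _ q3 _ hmem =>
    refine ⟨⟨_, hmem⟩, rfl, trans1 E Ax _ q m1 0 rfl, ?_⟩
    set x : M.I := ⟨(q, 2, q', some q3), hmem⟩
    have e1 : encStateC E x m1 0
        = Set.range E.σI ∪ {E.σIc x, E.σ2 0, E.σ1 m1} := by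
      rw [encStateC, Set.pair_comm (E.σ1 m1) (E.σ2 0)]
    have e2 : encState E q' m1 0
        = Set.range E.σI ∪ {E.σQ q', E.σ2 0, E.σ1 m1} := by
      rw [encState, Set.pair_comm (E.σ1 m1) (E.σ2 0)]
    rw [e1, e2]
    refine trans2_zero E Ax x (E.σ2 0) (E.σQ q') (E.σ1 m1)
      ?_ (h2c' 0 x) (h1c' m1 x) (hicI' x)
    rw [E.Rp_spec]
    exact Or.inr (Or.inr (Or.inr (Or.inr (Or.inr ⟨x, q3, rfl, by simp [sigC, x]⟩))))
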